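/- If a family of monic-degree-fixed real polynomials with continuously varying coefficients on a connected parameter domain has nowhere-vanishing discriminant and nowhere-vanishing leading coefficient, then the number of distinct real roots is constant on the domain. -/

import Mathlib

open Polynomial Set Filter Topology

lemma aux_coeff {n : ℕ} (a : Fin (n+1) → ℝ) (k : Fin (n+1)) :
    (∑ j : Fin (n+1), C (a j) * X ^ (j:ℕ)).coeff (k:ℕ) = a k := by
  rw [finset_sum_coeff]
  simp only [coeff_C_mul, coeff_X_pow]
  rw [Finset.sum_eq_single k]
  · simp
  · intro b _ hb
    have : (b:ℕ) ≠ (k:ℕ) := fun h => hb (Fin.ext h)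
    simp [this.symm]
  · simp

lemma aux_natDegree {n : ℕ} (a : Fin (n+1) → ℝ) (ha : a (Fin.last n) ≠ 0) :
    (∑ j : Fin (n+1), C (a j) * X ^ (j:ℕ)).natDegree = n := by
  apply le_antisymm
  · apply Polynomial.natDegree_sum_le_of_forall_le
    intro j _
    exact (natDegree_C_mul_le _ _).trans (by simp [Fin.is_le])
  · apply Polynomial.le_natDegree_of_ne_zero
    have h := aux_coeff a (Fin.last n)
    simp only [Fin.val_last] at h
    rw [h]; exact ha

lemma aux_ne_zero {n : ℕ} (a : Fin (n+1) → ℝ) (ha : a (Fin.last n) ≠ 0) :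
    (∑ j : Fin (n+1), C (a j) * X ^ (j:ℕ)) ≠ 0 := by
  intro h
  have := aux_coeff a (Fin.last n)
  rw [h] at this
  simp at this
  exact ha this.symm

lemma aux_eval {n : ℕ} (a : Fin (n+1) → ℝ) (x : ℝ) :
    eval x (∑ j : Fin (n+1), C (a j) * X ^ (j:ℕ)) = ∑ j : Fin (n+1), a j * x ^ (j:ℕ) := by
  simp [eval_finset_sum]

lemma aux_evalC {n : ℕ} (a : Fin (n+1) → ℝ) (w : ℂ) :
    eval w ((∑ j : Fin (n+1), C (a j) * X ^ (j:ℕ)).map (algebraMap ℝ ℂ)) =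
      ∑ j : Fin (n+1), (a j : ℂ) * w ^ (j:ℕ) := by
  simp [Polynomial.map_sum, eval_finset_sum]

lemma aux_evalDeriv {n : ℕ} (a : Fin (n+1) → ℝ) (x : ℝ) :
    eval x (derivative (∑ j : Fin (n+1), C (a j) * X ^ (j:ℕ))) =
      ∑ j : Fin (n+1), a j * ((j:ℕ) * x ^ ((j:ℕ) - 1)) := by
  rw [map_sum]
  simp [derivative_X_pow, eval_finset_sum, mul_assoc]


lemma aux_rootBound {n : ℕ} (hn : 0 < n) (a : Fin (n+1) → ℝ) {c B : ℝ} (hc : 0 < c)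
    (hlc : c ≤ |a (Fin.last n)|) (hB : ∀ k : Fin n, |a k.castSucc| ≤ B)
    (w : ℂ) (hw : ∑ j : Fin (n+1), (a j : ℂ) * w ^ (j:ℕ) = 0) :
    ‖w‖ ≤ max 1 (n * B / c) := by
  by_contra h
  push_neg at h
  have h1 : (1:ℝ) < ‖w‖ := lt_of_le_of_lt (le_max_left _ _) h
  have h2 : n * B / c < ‖w‖ := lt_of_le_of_lt (le_max_right _ _) h
  rw [Fin.sum_univ_castSucc] at hw
  have hkey : (a (Fin.last n) : ℂ) * w ^ n = -∑ k : Fin n, (a k.castSucc : ℂ) * w ^ (k:ℕ) := by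
    rw [eq_neg_iff_add_eq_zero, add_comm]
    simpa using hw
  have hrn : ∀ k : Fin n, ‖w‖ ^ (k:ℕ) ≤ ‖w‖ ^ (n-1) :=
    fun k => pow_le_pow_right₀ h1.le (Nat.le_pred_of_lt k.isLt)
  have hnorm : c * ‖w‖ ^ n ≤ n * B * ‖w‖ ^ (n-1) := by
    calc c * ‖w‖ ^ n ≤ |a (Fin.last n)| * ‖w‖ ^ n := by
          apply mul_le_mul_of_nonneg_right hlc (by positivity)
      _ = ‖(a (Fin.last n) : ℂ) * w ^ n‖ := by
          rw [norm_mul, norm_pow, Complex.norm_real, Real.norm_eq_abs]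
      _ = ‖∑ k : Fin n, (a k.castSucc : ℂ) * w ^ (k:ℕ)‖ := by rw [hkey, norm_neg]
      _ ≤ ∑ k : Fin n, ‖(a k.castSucc : ℂ) * w ^ (k:ℕ)‖ := norm_sum_le _ _
      _ ≤ ∑ _k : Fin n, B * ‖w‖ ^ (n-1) := by
          apply Finset.sum_le_sum
          intro k _
          rw [norm_mul, norm_pow, Complex.norm_real, Real.norm_eq_abs]
          have hB0 : 0 ≤ B := le_trans (abs_nonneg _) (hB k)
          exact mul_le_mul (hB k) (hrn k) (by positivity) hB0
      _ = n * B * ‖w‖ ^ (n-1) := by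
          rw [Finset.sum_const, Finset.card_univ, Fintype.card_fin, nsmul_eq_mul]; ring
  have hpow : ‖w‖ ^ n = ‖w‖ * ‖w‖ ^ (n-1) := by
    conv_lhs => rw [show n = (n-1)+1 from (Nat.succ_pred_eq_of_pos hn).symm]
    rw [pow_succ]; ring
  rw [hpow, ← mul_assoc] at hnorm
  have hwpos : (0:ℝ) < ‖w‖ ^ (n-1) := by positivity
  have := (mul_le_mul_iff_of_pos_right hwpos).mp hnorm
  have : ‖w‖ ≤ n * B / c := by
    rw [le_div_iff₀ hc]; linarith [this]
  linarith


lemma aux_local {n : ℕ} (hn : 0 < n) {Z : Type*} [TopologicalSpace Z]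
    (g : Z → Fin (n + 1) → ℝ) (hg : ∀ k, Continuous (fun z => g z k))
    (G : Z → Polynomial ℝ)
    (hG : ∀ z, G z = ∑ k : Fin (n + 1), C (g z k) * X ^ (k : ℕ))
    (hlead : ∀ z, g z (Fin.last n) ≠ 0)
    (hdisc : ∀ z, ((G z).map (algebraMap ℝ ℂ)).Separable) (z0 : Z) :
    ∀ᶠ z in 𝓝 z0, (G z).roots.toFinset.card = (G z0).roots.toFinset.card := by
  -- basic facts
  have hGne : ∀ z, G z ≠ 0 := by
    intro z; rw [hG z]
    exact aux_ne_zero _ (hlead z)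
  have hmemR : ∀ z x, x ∈ (G z).roots.toFinset ↔ eval x (G z) = 0 := by
    intro z x
    rw [Multiset.mem_toFinset, mem_roots']
    exact ⟨fun h => h.2, fun h => ⟨hGne z, h⟩⟩
  have hPne : ((G z0).map (algebraMap ℝ ℂ)) ≠ 0 :=
    (Polynomial.map_ne_zero_iff (algebraMap ℝ ℂ).injective).mpr (hGne z0)
  have hmemT : ∀ w : ℂ, w ∈ ((G z0).map (algebraMap ℝ ℂ)).roots.toFinset ↔
      eval w ((G z0).map (algebraMap ℝ ℂ)) = 0 := by
    intro w
    rw [Multiset.mem_toFinset, mem_roots']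
    exact ⟨fun h => h.2, fun h => ⟨hPne, h⟩⟩
  -- separability consequences
  have hsep : (G z0).Separable := (separable_map (algebraMap ℝ ℂ)).mp (hdisc z0)
  have hderiv_root : ∀ α : ℝ, eval α (G z0) = 0 → eval α (derivative (G z0)) ≠ 0 := by
    intro α hα hcon
    obtain ⟨u, v, huv⟩ := hsep
    have := congrArg (eval α) huv
    simp [hα, hcon] at this
  -- finsets
  set RR : Finset ℝ := (G z0).roots.toFinset with hRR
  set T : Finset ℂ := ((G z0).map (algebraMap ℝ ℂ)).roots.toFinset with hT
  set DR : Finset ℝ := (derivative (G z0)).roots.toFinset with hDR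
  have hmemRR : ∀ x, x ∈ RR ↔ eval x (G z0) = 0 := hmemR z0
  -- epsilon
  set A1 : Finset ℝ := (T.filter fun r => r.im ≠ 0).image fun r => |r.im| with hA1
  set A2 : Finset ℝ := ((RR ×ˢ RR).filter fun p => p.1 ≠ p.2).image fun p => |p.1 - p.2| / 4
    with hA2
  set A3 : Finset ℝ := (DR ×ˢ RR).image (fun p => |p.1 - p.2| / 2) with hA3
  set E : Finset ℝ := insert (1:ℝ) (A1 ∪ A2 ∪ A3) with hE
  have hEne : E.Nonempty := ⟨1, Finset.mem_insert_self _ _⟩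
  set ε : ℝ := E.min' hEne with hεdef
  have hεmem : ∀ x ∈ E, ε ≤ x := fun x hx => Finset.min'_le _ _ hx
  have hεpos : 0 < ε := by
    have hmin : ε ∈ E := Finset.min'_mem _ _
    rw [hE, Finset.mem_insert, Finset.mem_union, Finset.mem_union] at hmin
    rcases hmin with h | (h | h) | h
    · rw [h]; norm_num
    · rw [hA1] at h
      obtain ⟨r, hr, hrr⟩ := Finset.mem_image.mp h
      rw [Finset.mem_filter] at hr
      rw [← hrr]
      exact abs_pos.mpr hr.2
    · rw [hA2] at h
      obtain ⟨p, hp, hpp⟩ := Finset.mem_image.mp h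
      rw [Finset.mem_filter] at hp
      rw [← hpp]
      have : p.1 - p.2 ≠ 0 := sub_ne_zero.mpr hp.2
      positivity
    · rw [hA3] at h
      obtain ⟨p, hp, hpp⟩ := Finset.mem_image.mp h
      rw [Finset.mem_product] at hp
      rw [← hpp]
      have hne : p.1 ≠ p.2 := by
        intro hcon
        have h2 : eval p.2 (G z0) = 0 := (hmemRR p.2).mp hp.2
        have h1 : eval p.1 (derivative (G z0)) = 0 := by
          have := Multiset.mem_toFinset.mp hp.1
          exact (mem_roots'.mp this).2
        rw [hcon] at h1
        exact hderiv_root p.2 h2 h1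
      have : p.1 - p.2 ≠ 0 := sub_ne_zero.mpr hne
      positivity
  have hεim : ∀ r ∈ T, r.im ≠ 0 → ε ≤ |r.im| := by
    intro r hr him
    apply hεmem
    rw [hE]
    refine Finset.mem_insert_of_mem (Finset.mem_union_left _ (Finset.mem_union_left _ ?_))
    exact Finset.mem_image.mpr ⟨r, Finset.mem_filter.mpr ⟨hr, him⟩, rfl⟩
  have hεsep : ∀ α ∈ RR, ∀ β ∈ RR, α ≠ β → ε ≤ |α - β| / 4 := by
    intro α hα β hβ hne
    apply hεmem
    rw [hE]
    refine Finset.mem_insert_of_mem (Finset.mem_union_left _ (Finset.mem_union_right _ ?_))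
    exact Finset.mem_image.mpr ⟨(α, β), Finset.mem_filter.mpr
      ⟨Finset.mem_product.mpr ⟨hα, hβ⟩, hne⟩, rfl⟩
  have hεderiv : ∀ y ∈ DR, ∀ α ∈ RR, ε ≤ |y - α| / 2 := by
    intro y hy α hα
    apply hεmem
    rw [hE]
    refine Finset.mem_insert_of_mem (Finset.mem_union_right _ ?_)
    exact Finset.mem_image.mpr ⟨(y, α), Finset.mem_product.mpr ⟨hy, hα⟩, rfl⟩
  -- constants
  set c : ℝ := |g z0 (Fin.last n)| / 2 with hcdef
  have hc : 0 < c := by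
    have := abs_pos.mpr (hlead z0)
    rw [hcdef]; linarith
  set B : ℝ := 1 + ∑ j : Fin (n+1), |g z0 j| with hBdef
  set R : ℝ := max 1 (n * B / c) with hRdef
  set K' : Set ℂ := {w | ‖w‖ ≤ R ∧ ∀ r ∈ T, ε ≤ dist w r} with hK'def
  have hK'c : IsCompact K' := by
    apply Metric.isCompact_of_isClosed_isBounded
    · have : K' = {w : ℂ | ‖w‖ ≤ R} ∩ ⋂ r ∈ (T : Finset ℂ), {w : ℂ | ε ≤ dist w r} := by
        ext w
        simp only [hK'def, Set.mem_setOf_eq, Set.mem_inter_iff, Set.mem_iInter]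
      rw [this]
      refine (isClosed_le continuous_norm continuous_const).inter ?_
      refine isClosed_biInter fun r _ => isClosed_le continuous_const ?_
      exact (continuous_id.dist continuous_const)
    · apply Bornology.IsBounded.subset (Metric.isBounded_closedBall (x := (0:ℂ)) (r := R))
      intro w hw
      rw [Metric.mem_closedBall, dist_zero_right]
      exact hw.1
  -- continuity of the complex evaluation
  have hFc : Continuous (fun q : Z × ℂ => eval q.2 ((G q.1).map (algebraMap ℝ ℂ))) := by
    have : (fun q : Z × ℂ => eval q.2 ((G q.1).map (algebraMap ℝ ℂ))) =
        fun q : Z × ℂ => ∑ j : Fin (n+1), ((g q.1 j : ℂ) * q.2 ^ (j:ℕ)) := by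
      funext q
      rw [hG q.1, aux_evalC]
    rw [this]
    refine continuous_finset_sum _ fun j _ => Continuous.mul ?_ ?_
    · exact Complex.continuous_ofReal.comp ((hg j).comp continuous_fst)
    · exact continuous_snd.pow _
  -- eventual statements
  have F1 : ∀ᶠ z in 𝓝 z0, ∀ k, |g z k - g z0 k| ≤ 1 := by
    rw [eventually_all]
    intro k
    have : Tendsto (fun z => g z k) (𝓝 z0) (𝓝 (g z0 k)) := (hg k).tendsto z0
    have := (Metric.tendsto_nhds.mp this) 1 one_pos
    filter_upwards [this] with z hz
    rw [Real.dist_eq] at hz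
    exact hz.le
  have F2 : ∀ᶠ z in 𝓝 z0, c ≤ |g z (Fin.last n)| := by
    have hcont : ContinuousAt (fun z => |g z (Fin.last n)|) z0 :=
      ((hg (Fin.last n)).abs).continuousAt
    have hlt : c < |g z0 (Fin.last n)| := by
      have := abs_pos.mpr (hlead z0)
      rw [hcdef]; linarith
    have := hcont (isOpen_Ioi.mem_nhds hlt)
    filter_upwards [this] with z hz
    exact (Set.mem_Ioi.mp hz).le
  have F3 : ∀ᶠ z in 𝓝 z0, ∀ w ∈ K', eval w ((G z).map (algebraMap ℝ ℂ)) ≠ 0 := by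
    apply hK'c.eventually_forall_of_forall_eventually
    intro w hw
    have hopen : IsOpen {q : Z × ℂ | eval q.2 ((G q.1).map (algebraMap ℝ ℂ)) ≠ 0} := by
      have : {q : Z × ℂ | eval q.2 ((G q.1).map (algebraMap ℝ ℂ)) ≠ 0} =
          (fun q : Z × ℂ => eval q.2 ((G q.1).map (algebraMap ℝ ℂ))) ⁻¹' {0}ᶜ := rfl
      rw [this]
      exact (isClosed_singleton.preimage hFc).isOpen_compl
    have hval : eval w ((G z0).map (algebraMap ℝ ℂ)) ≠ 0 := by
      intro hcon
      have : w ∈ T := (hmemT w).mpr hcon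
      have := hw.2 w this
      rw [dist_self] at this
      linarith
    exact hopen.eventually_mem hval
  -- derivative continuity
  have hDc : Continuous (fun q : Z × ℝ => eval q.2 (derivative (G q.1))) := by
    have : (fun q : Z × ℝ => eval q.2 (derivative (G q.1))) =
        fun q : Z × ℝ => ∑ j : Fin (n+1), g q.1 j * ((j:ℕ) * q.2 ^ ((j:ℕ) - 1)) := by
      funext q
      rw [hG q.1, aux_evalDeriv]
    rw [this]
    refine continuous_finset_sum _ fun j _ => Continuous.mul ((hg j).comp continuous_fst) ?_
    exact continuous_const.mul ((continuous_snd.pow _))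
  have F4 : ∀ᶠ z in 𝓝 z0, ∀ α ∈ RR, ∀ x ∈ Icc (α - ε) (α + ε),
      eval x (derivative (G z)) ≠ 0 := by
    rw [eventually_all_finset]
    intro α hα
    apply (isCompact_Icc (a := α - ε) (b := α + ε)).eventually_forall_of_forall_eventually
    intro x hx
    have hopen : IsOpen {q : Z × ℝ | eval q.2 (derivative (G q.1)) ≠ 0} :=
      (isClosed_singleton.preimage hDc).isOpen_compl
    have hval : eval x (derivative (G z0)) ≠ 0 := by
      intro hcon
      have hdne : derivative (G z0) ≠ 0 := by
        intro hzero
        apply hderiv_root α ((hmemRR α).mp hα)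
        rw [hzero, eval_zero]
      have hxDR : x ∈ DR := Multiset.mem_toFinset.mpr (mem_roots'.mpr ⟨hdne, hcon⟩)
      have h1 : ε ≤ |x - α| / 2 := hεderiv x hxDR α hα
      have h2 : |x - α| ≤ ε := abs_sub_le_iff.mpr ⟨by linarith [hx.2], by linarith [hx.1]⟩
      linarith
    exact hopen.eventually_mem hval
  have F5 : ∀ᶠ z in 𝓝 z0, ∀ α ∈ RR, eval (α - ε) (G z) * eval (α + ε) (G z) < 0 := by
    rw [eventually_all_finset]
    intro α hα
    have hcont : Continuous fun z => eval (α - ε) (G z) * eval (α + ε) (G z) := by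
      have he : ∀ x : ℝ, Continuous fun z => eval x (G z) := by
        intro x
        have : (fun z => eval x (G z)) = fun z => ∑ j : Fin (n+1), g z j * x ^ (j:ℕ) := by
          funext z; rw [hG z, aux_eval]
        rw [this]
        exact continuous_finset_sum _ fun j _ => ((hg j).mul continuous_const)
      exact (he _).mul (he _)
    -- value at z0 is negative
    have hval : eval (α - ε) (G z0) * eval (α + ε) (G z0) < 0 := by
      have hroot : eval α (G z0) = 0 := (hmemRR α).mp hα
      obtain ⟨q, hq⟩ := (dvd_iff_isRoot.mpr hroot : (X - C α) ∣ G z0)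
      have hqα : eval α q ≠ 0 := by
        have hd : eval α (derivative (G z0)) = eval α q := by
          rw [hq, derivative_mul]
          simp
        intro hcon
        exact hderiv_root α hroot (by rw [hd, hcon])
      have hno : ∀ y ∈ Icc (α - ε) (α + ε), eval y q ≠ 0 := by
        intro y hy hcon
        have hyroot : eval y (G z0) = 0 := by rw [hq, eval_mul, hcon, mul_zero]
        have hyRR : y ∈ RR := (hmemRR y).mpr hyroot
        by_cases hcase : y = α
        · rw [hcase] at hcon; exact hqα hcon
        · have h1 : ε ≤ |y - α| / 4 := hεsep y hyRR α hα hcase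
          have h2 : |y - α| ≤ ε := abs_sub_le_iff.mpr ⟨by linarith [hy.2], by linarith [hy.1]⟩
          linarith
      have hqcont : ContinuousOn (fun y => eval y q) (Icc (α - ε) (α + ε)) :=
        (Polynomial.continuous q).continuousOn
      have hab : α - ε ≤ α + ε := by linarith
      have hsign : 0 < eval (α - ε) q * eval (α + ε) q := by
        rcases lt_trichotomy (eval (α - ε) q * eval (α + ε) q) 0 with h | h | h
        · exfalso
          rcases mul_neg_iff.mp h with ⟨hu, hv⟩ | ⟨hu, hv⟩
          · obtain ⟨y, hy, hy0⟩ := intermediate_value_Icc' hab hqcont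
              (Set.mem_Icc.mpr ⟨hv.le, hu.le⟩)
            exact hno y hy hy0
          · obtain ⟨y, hy, hy0⟩ := intermediate_value_Icc hab hqcont
              (Set.mem_Icc.mpr ⟨hu.le, hv.le⟩)
            exact hno y hy hy0
        · exfalso
          rcases mul_eq_zero.mp h with h | h
          · exact hno _ (Set.mem_Icc.mpr ⟨le_refl _, by linarith⟩) h
          · exact hno _ (Set.mem_Icc.mpr ⟨by linarith, le_refl _⟩) h
        · exact h
      have heval : eval (α - ε) (G z0) * eval (α + ε) (G z0) =
          -(ε^2) * (eval (α - ε) q * eval (α + ε) q) := by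
        simp only [hq, eval_mul, eval_sub, eval_X, eval_C]
        ring
      rw [heval]
      nlinarith [mul_pos (mul_pos hεpos hεpos) hsign]
    have := hcont.continuousAt (x := z0) (isOpen_Iio.mem_nhds hval)
    filter_upwards [this] with z hz
    exact hz
  -- combine
  filter_upwards [F1, F2, F3, F4, F5] with z h1 h2 h3 h4 h5
  have hmemz : ∀ x, x ∈ (G z).roots.toFinset ↔ eval x (G z) = 0 := hmemR z
  -- cover claim
  have hcover : ∀ x : ℝ, eval x (G z) = 0 → ∃ α ∈ RR, |x - α| < ε := by
    intro x hx
    have hxC : ∑ j : Fin (n+1), (g z j : ℂ) * (x:ℂ) ^ (j:ℕ) = 0 := by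
      have hre : ∑ j : Fin (n+1), g z j * x ^ (j:ℕ) = 0 := by
        rw [← aux_eval, ← hG z]; exact hx
      have := congrArg (fun t : ℝ => (t : ℂ)) hre
      push_cast at this
      exact this
    have hB' : ∀ k : Fin n, |g z (Fin.castSucc k)| ≤ B := by
      intro k
      have h1k := h1 (Fin.castSucc k)
      have ht : |g z (Fin.castSucc k)| ≤ |g z0 (Fin.castSucc k)| + 1 := by
        have := abs_sub_abs_le_abs_sub (g z (Fin.castSucc k)) (g z0 (Fin.castSucc k))
        linarith
      have h2' : |g z0 (Fin.castSucc k)| ≤ ∑ j : Fin (n+1), |g z0 j| :=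
        Finset.single_le_sum (f := fun j : Fin (n+1) => |g z0 j|)
          (fun j _ => abs_nonneg _) (Finset.mem_univ _)
      rw [hBdef]; linarith
    have hbound := aux_rootBound hn (g z) hc h2 hB' (x:ℂ) hxC
    have hbound' : ‖(x:ℂ)‖ ≤ R := by rw [hRdef]; exact hbound
    have hevalz : eval (x:ℂ) ((G z).map (algebraMap ℝ ℂ)) = 0 := by
      rw [hG z, aux_evalC]; exact hxC
    have hnotK : (x:ℂ) ∉ K' := fun hK => h3 _ hK hevalz
    have hex : ∃ r ∈ T, dist (x:ℂ) r < ε := by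
      by_contra hcon
      push_neg at hcon
      exact hnotK ⟨hbound', fun r hr => hcon r hr⟩
    obtain ⟨r, hrT, hrd⟩ := hex
    have him : r.im = 0 := by
      by_contra him
      have h1' := hεim r hrT him
      have himle : |r.im| ≤ dist (x:ℂ) r := by
        rw [Complex.dist_eq]
        have := Complex.abs_im_le_norm ((x:ℂ) - r)
        simpa using this
      linarith
    have hrre : ((r.re : ℝ) : ℂ) = r := Complex.ext (by simp) (by simp [him])
    have hαroot : eval r.re (G z0) = 0 := by
      have hev : eval r ((G z0).map (algebraMap ℝ ℂ)) = 0 :=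
        (mem_roots'.mp (Multiset.mem_toFinset.mp hrT)).2
      rw [← hrre, show ((r.re:ℝ):ℂ) = algebraMap ℝ ℂ r.re from rfl, eval_map,
        eval₂_at_apply] at hev
      exact (_root_.map_eq_zero (algebraMap ℝ ℂ)).mp hev
    refine ⟨r.re, (hmemRR r.re).mpr hαroot, ?_⟩
    have hde : dist (x:ℂ) r = |x - r.re| := by
      rw [← hrre, Complex.dist_eq, ← Complex.ofReal_sub, Complex.norm_real, Real.norm_eq_abs,
        Complex.ofReal_re]
    rw [← hde]
    exact hrd
  -- existence claim
  have hexists : ∀ α ∈ RR, ∃ x, eval x (G z) = 0 ∧ x ∈ Ioo (α - ε) (α + ε) := by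
    intro α hα
    have h5' := h5 α hα
    have hab : α - ε ≤ α + ε := by linarith
    have hcont : ContinuousOn (fun y => eval y (G z)) (Icc (α - ε) (α + ε)) :=
      (Polynomial.continuous _).continuousOn
    rcases mul_neg_iff.mp h5' with ⟨hu, hv⟩ | ⟨hu, hv⟩
    · obtain ⟨x, hx, hx0⟩ := intermediate_value_Ioo' hab hcont (Set.mem_Ioo.mpr ⟨hv, hu⟩)
      exact ⟨x, hx0, hx⟩
    · obtain ⟨x, hx, hx0⟩ := intermediate_value_Ioo hab hcont (Set.mem_Ioo.mpr ⟨hu, hv⟩)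
      exact ⟨x, hx0, hx⟩
  -- uniqueness claim
  have huniq : ∀ α ∈ RR, ∀ x y : ℝ, eval x (G z) = 0 → eval y (G z) = 0 →
      x ∈ Icc (α - ε) (α + ε) → y ∈ Icc (α - ε) (α + ε) → x = y := by
    intro α hα x y hx hy hxI hyI
    by_contra hne
    have key : ∀ u v : ℝ, u < v → eval u (G z) = 0 → eval v (G z) = 0 →
        u ∈ Icc (α - ε) (α + ε) → v ∈ Icc (α - ε) (α + ε) → False := by
      intro u v huv hu hv huI hvI
      obtain ⟨w, hw, hw0⟩ := exists_deriv_eq_zero huv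
        ((Polynomial.continuous (G z)).continuousOn) (by rw [hu, hv])
      rw [Polynomial.deriv] at hw0
      exact h4 α hα w ⟨by linarith [hw.1, huI.1], by linarith [hw.2, hvI.2]⟩ hw0
    rcases lt_or_gt_of_ne hne with h | h
    · exact key x y h hx hy hxI hyI
    · exact key y x h hy hx hyI hxI
  -- bijection
  have hchoose : ∀ α (hα : α ∈ RR), ∃ x, eval x (G z) = 0 ∧ x ∈ Ioo (α - ε) (α + ε) :=
    fun α hα => hexists α hα
  have hcard : RR.card = (G z).roots.toFinset.card := by
    apply Finset.card_bij (fun α hα => Classical.choose (hchoose α hα))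
    · intro α hα
      exact (hmemz _).mpr (Classical.choose_spec (hchoose α hα)).1
    · intro α hα β hβ heq
      by_contra hne
      have hsA := (Classical.choose_spec (hchoose α hα)).2
      have hsB := (Classical.choose_spec (hchoose β hβ)).2
      rw [heq] at hsA
      have h4e : ε ≤ |α - β| / 4 := hεsep α hα β hβ hne
      have hlt : |α - β| < 2 * ε := by
        rw [abs_sub_lt_iff]
        constructor <;> [linarith [hsA.1, hsB.2]; linarith [hsA.2, hsB.1]]
      linarith
    · intro x hx
      have hx0 := (hmemz x).mp hx
      obtain ⟨α, hα, hd⟩ := hcover x hx0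
      refine ⟨α, hα, ?_⟩
      have hs := Classical.choose_spec (hchoose α hα)
      apply huniq α hα _ x hs.1 hx0
      · exact Set.mem_Icc.mpr ⟨hs.2.1.le, hs.2.2.le⟩
      · have hab := abs_sub_lt_iff.mp hd
        exact Set.mem_Icc.mpr ⟨by linarith [hab.1], by linarith [hab.2]⟩
  exact hcard.symm


/-- A continuous family of real polynomials of degree exactly `n` (nonvanishing leading
coefficient) over a connected space, with nowhere-vanishing discriminant (formalized: all
complex roots simple, i.e. the polynomial mapped to `ℂ` is separable), has a constant
number of distinct real roots. -/
theorem stmt_7 {Z : Type*} [TopologicalSpace Z] [ConnectedSpace Z] (n : ℕ)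
    (g : Z → Fin (n + 1) → ℝ) (hg : ∀ k, Continuous (fun z => g z k))
    (G : Z → Polynomial ℝ)
    (hG : ∀ z, G z = ∑ k : Fin (n + 1), C (g z k) * X ^ (k : ℕ))
    (hlead : ∀ z, g z (Fin.last n) ≠ 0)
    (hdisc : ∀ z, ((G z).map (algebraMap ℝ ℂ)).Separable) :
    ∀ z w : Z, (G z).roots.toFinset.card = (G w).roots.toFinset.card := by
  rcases Nat.eq_zero_or_pos n with hn | hn
  · subst hn
    have hz : ∀ z : Z, (G z).roots = 0 := by
      intro z
      rw [hG z]
      rw [show (∑ k : Fin 1, C (g z k) * X ^ (k:ℕ)) = C (g z 0) by simp]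
      exact roots_C _
    intro z w; rw [hz z, hz w]
  have key : IsLocallyConstant (fun z => (G z).roots.toFinset.card) := by
    rw [IsLocallyConstant.iff_eventually_eq]
    intro z0
    exact aux_local hn g hg G hG hlead hdisc z0
  intro z w
  exact key.apply_eq_of_preconnectedSpace z w
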